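/- arXiv:1801.02162 — 2 statements merged into one kernel-verified Lean document; each statement's English description precedes it below -/
import Mathlib

section
/- Let P be a convex polygon and ω ∈ (0, π). For a vertex v of P with interior angle α(v), v coincides with the apex of some minimal ω-wedge of P (i.e., v lies on the ω-cloud of P) if and only if α(v) ≤ ω. -/
open EuclideanGeometry Real Set
open scoped Classical

noncomputable section

abbrev Plane := EuclideanSpace ℝ (Fin 2)

/-- The unit vector in direction `θ`. -/
def unitVec (θ : ℝ) : Plane := (WithLp.equiv 2 (Fin 2 → ℝ)).symm ![Real.cos θ, Real.sin θ]

/-- The closed ray from `x` in direction `d`. -/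
def ray (x d : Plane) : Set Plane := {y | ∃ t : ℝ, 0 ≤ t ∧ y = x + t • d}

/-- The closed wedge with apex `x` bounded by the rays in directions `d₁` and `d₂`. -/
def wedgeSet (x d₁ d₂ : Plane) : Set Plane :=
  {y | ∃ s t : ℝ, 0 ≤ s ∧ 0 ≤ t ∧ y = x + s • d₁ + t • d₂}

/-- The wedge with apex `x`, arm directions `d₁`, `d₂` (unit vectors at angle `ω`),
is a minimal `ω`-wedge for `P`: it contains `P` and both arms touch `P`. -/
def IsMinWedge (P : Set Plane) (ω : ℝ) (x d₁ d₂ : Plane) : Prop :=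
  ‖d₁‖ = 1 ∧ ‖d₂‖ = 1 ∧ InnerProductGeometry.angle d₁ d₂ = ω ∧
  P ⊆ wedgeSet x d₁ d₂ ∧ (P ∩ ray x d₁).Nonempty ∧ (P ∩ ray x d₂).Nonempty

/-- The `ω`-cloud of `P`: the locus of apices of all minimal `ω`-wedges. -/
def omegaCloud (P : Set Plane) (ω : ℝ) : Set Plane := {x | ∃ d₁ d₂, IsMinWedge P ω x d₁ d₂}

/-- `V` is the vertex set of a convex polygon: at least 3 points, in strictly convex position. -/
def IsConvexPolygon (V : Finset Plane) : Prop :=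
  3 ≤ V.card ∧ ∀ v ∈ V, v ∉ convexHull ℝ ((V.erase v : Finset Plane) : Set Plane)

/-- The interior angle of a convex body `P` at a boundary point `v`, defined as the
supremum of angles `∠ a v b` over `a, b ∈ P \ {v}`. -/
def interiorAngle (P : Set Plane) (v : Plane) : ℝ :=
  sSup {θ : ℝ | ∃ a ∈ P, ∃ b ∈ P, a ≠ v ∧ b ≠ v ∧ θ = EuclideanGeometry.angle a v b}

/-- A circular arc, given by center, radius, starting angle and angular extent. -/
structure CircArc where
  center : Plane
  radius : ℝ
  start : ℝ
  delta : ℝ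

/-- The (closed) point set of a circular arc. -/
def CircArc.points (A : CircArc) : Set Plane :=
  {p | ∃ θ ∈ Set.Icc A.start (A.start + A.delta), p = A.center + A.radius • unitVec θ}

/-- The relative interior of a circular arc. -/
def CircArc.intPoints (A : CircArc) : Set Plane :=
  {p | ∃ θ ∈ Set.Ioo A.start (A.start + A.delta), p = A.center + A.radius • unitVec θ}

/-- The start point of an arc when it is traversed clockwise. -/
def CircArc.cwStart (A : CircArc) : Plane := A.center + A.radius • unitVec (A.start + A.delta)

/-- The end point of an arc when it is traversed clockwise. -/
def CircArc.cwEnd (A : CircArc) : Plane := A.center + A.radius • unitVec A.start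

/-- The set of (bisector) directions of minimal `ω`-wedges of `P` with apex `x`. -/
def wedgeDirs (P : Set Plane) (ω : ℝ) (x : Plane) : Set Plane :=
  {d | ∃ d₁ d₂, IsMinWedge P ω x d₁ d₂ ∧ d = (‖d₁ + d₂‖)⁻¹ • (d₁ + d₂)}

/-- On every interior point of the arc `A`, the minimal `ω`-wedge of `P` touches `P`
at `p` (with one arm) and `q` (with the other arm). -/
def ContactPair (P : Set Plane) (ω : ℝ) (A : CircArc) (p q : Plane) : Prop :=
  ∀ x ∈ A.intPoints, ∃ d₁ d₂, IsMinWedge P ω x d₁ d₂ ∧ p ∈ ray x d₁ ∧ q ∈ ray x d₂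

section Aux
open scoped RealInnerProductSpace

set_option maxHeartbeats 1000000

lemma inner_unitVec (a b : ℝ) : ⟪unitVec a, unitVec b⟫ = Real.cos (a - b) := by
  simp [unitVec, PiLp.inner_apply, Fin.sum_univ_two, Real.cos_sub]; ring

lemma norm_unitVec (a : ℝ) : ‖unitVec a‖ = 1 := by
  have h : ‖unitVec a‖^2 = 1 := by
    rw [← real_inner_self_eq_norm_sq, inner_unitVec]; simp
  nlinarith [norm_nonneg (unitVec a)]

lemma arccos_le_arccos' {x y : ℝ} (h : x ≤ y) : Real.arccos y ≤ Real.arccos x := by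
  simp only [Real.arccos]
  have := Real.monotone_arcsin h
  linarith

lemma angle_unitVec {a b : ℝ} (h : |a - b| ≤ π) :
    InnerProductGeometry.angle (unitVec a) (unitVec b) = |a - b| := by
  rw [InnerProductGeometry.angle, inner_unitVec, norm_unitVec, norm_unitVec]
  have : Real.cos (a - b) = Real.cos |a - b| := (Real.cos_abs (a-b)).symm
  rw [this]
  simp only [mul_one, div_one]
  exact Real.arccos_cos (abs_nonneg _) h

lemma sqrt_mono_sq {a b : ℝ} (hb : 0 ≤ b) (h : a^2 ≤ b^2) (ha : 0 ≤ a) : a ≤ b := by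
  nlinarith

lemma key_ineq (s₁ t₁ s₂ t₂ c p q : ℝ) (hs₁ : 0 ≤ s₁) (ht₁ : 0 ≤ t₁) (hs₂ : 0 ≤ s₂)
    (ht₂ : 0 ≤ t₂) (hc₁ : -1 ≤ c) (hc₂ : c ≤ 1) (hp : 0 ≤ p) (hq : 0 ≤ q)
    (hp2 : p^2 = s₁^2 + t₁^2 + 2*s₁*t₁*c) (hq2 : q^2 = s₂^2 + t₂^2 + 2*s₂*t₂*c) :
    c * (p*q) ≤ s₁*s₂ + t₁*t₂ + (s₁*t₂ + s₂*t₁)*c := by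
  have hid : p^2 * q^2 - (s₁*s₂ + t₁*t₂ + (s₁*t₂ + s₂*t₁)*c)^2
      = (s₁*t₂ - s₂*t₁)^2 * (1 - c^2) := by rw [hp2, hq2]; ring
  have hc2 : 0 ≤ 1 - c^2 := by nlinarith
  rcases le_or_gt 0 c with hc0 | hc0
  · have hDB : (s₁*t₂ - s₂*t₁)^2 ≤ p^2 * q^2 := by
      rw [hp2, hq2]
      nlinarith [mul_nonneg (mul_nonneg hc0 (by positivity : (0:ℝ) ≤ s₁*s₂ + t₁*t₂))
          (by positivity : (0:ℝ) ≤ s₁*t₂+s₂*t₁),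
        sq_nonneg (s₁*s₂ + t₁*t₂),
        mul_nonneg (sq_nonneg c) (mul_nonneg (mul_nonneg (mul_nonneg hs₁ ht₁) hs₂) ht₂)]
    have hsq : (c * (p*q))^2 ≤ (s₁*s₂ + t₁*t₂ + (s₁*t₂ + s₂*t₁)*c)^2 := by
      nlinarith [mul_nonneg hc2 (sub_nonneg.2 hDB)]
    exact sqrt_mono_sq (by positivity) hsq (by positivity)
  · rcases le_or_gt 0 (s₁*s₂ + t₁*t₂ + (s₁*t₂ + s₂*t₁)*c) with hL0 | hL0
    · calc c * (p*q) ≤ 0 := mul_nonpos_of_nonpos_of_nonneg hc0.le (by positivity)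
        _ ≤ _ := hL0
    · have hxcy : c * (s₁*t₂ + s₂*t₁) ≤ -(s₁*s₂ + t₁*t₂) := by nlinarith
      have h2cxy : (s₁*s₂ + t₁*t₂) * (c * (s₁*t₂ + s₂*t₁)) ≤ (s₁*s₂ + t₁*t₂) * (-(s₁*s₂ + t₁*t₂)) :=
        mul_le_mul_of_nonneg_left hxcy (by positivity)
      have hx2 : 4*(s₁*t₁)*(s₂*t₂) ≤ (s₁*s₂ + t₁*t₂)^2 := by nlinarith [sq_nonneg (s₁*s₂ - t₁*t₂)]
      have hc2ef : c^2 * ((s₁*t₁)*(s₂*t₂)) ≤ (s₁*t₁)*(s₂*t₂) := by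
        nlinarith [mul_nonneg (mul_nonneg hs₁ ht₁) (mul_nonneg hs₂ ht₂)]
      have hBD : p^2 * q^2 ≤ (s₁*t₂ - s₂*t₁)^2 := by
        rw [hp2, hq2]; nlinarith [h2cxy, hx2, hc2ef]
      have hsq : (-(s₁*s₂ + t₁*t₂ + (s₁*t₂ + s₂*t₁)*c))^2 ≤ ((-c) * (p*q))^2 := by
        nlinarith [mul_nonneg hc2 (sub_nonneg.2 hBD)]
      have := sqrt_mono_sq (mul_nonneg (by linarith : (0:ℝ) ≤ -c) (by positivity)) hsq (by linarith)
      linarith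

lemma exp_real_mul_I (t : ℝ) :
    Complex.exp ((t : ℂ) * Complex.I) = (Real.cos t : ℂ) + (Real.sin t : ℂ) * Complex.I := by
  rw [Complex.exp_mul_I, ← Complex.ofReal_cos, ← Complex.ofReal_sin]

lemma exists_polar (ν : ℝ) (x : Plane) (hx : 0 < Real.cos ν * x 0 + Real.sin ν * x 1) :
    ∃ r β : ℝ, 0 < r ∧ |β| < π/2 ∧ x = r • unitVec (ν + β) := by
  set z : ℂ := Complex.exp (((-ν : ℝ) : ℂ) * Complex.I) * (x 0 + x 1 * Complex.I) with hz
  have hre : z.re = Real.cos ν * x 0 + Real.sin ν * x 1 := by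
    rw [hz, exp_real_mul_I]
    simp [Complex.add_re, Complex.add_im, Complex.mul_re, Complex.mul_im,
      Complex.cos_ofReal_re, Complex.sin_ofReal_re, Complex.cos_ofReal_im, Complex.sin_ofReal_im,
      Real.cos_neg, Real.sin_neg]
  have hz0 : z ≠ 0 := fun h => by rw [h] at hre; simp at hre; linarith
  refine ⟨‖z‖, z.arg, norm_pos_iff.mpr hz0,
    Complex.abs_arg_lt_pi_div_two_iff.2 (Or.inl (by rw [hre]; exact hx)), ?_⟩
  have h1 : (x 0 : ℂ) + x 1 * Complex.I
      = ((‖z‖ : ℝ) : ℂ) * Complex.exp (((ν + z.arg : ℝ) : ℂ) * Complex.I) := by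
    calc (x 0 : ℂ) + x 1 * Complex.I = Complex.exp ((ν : ℂ) * Complex.I) * z := by
          rw [hz, ← mul_assoc, ← Complex.exp_add]
          push_cast
          ring_nf
          simp
      _ = Complex.exp ((ν : ℂ) * Complex.I) * (((‖z‖ : ℝ) : ℂ) * Complex.exp ((z.arg :ℂ) * Complex.I)) := by
          rw [Complex.norm_mul_exp_arg_mul_I z]
      _ = _ := by push_cast; rw [add_mul, Complex.exp_add]; ring
  rw [exp_real_mul_I] at h1
  have h0 : x 0 = ‖z‖ * Real.cos (ν + z.arg) := by
    have := congrArg Complex.re h1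
    simpa [Complex.add_re, Complex.mul_re, ← Complex.ofReal_add, Complex.cos_ofReal_re, Complex.sin_ofReal_im] using this
  have h1' : x 1 = ‖z‖ * Real.sin (ν + z.arg) := by
    have := congrArg Complex.im h1
    simpa [Complex.add_im, Complex.mul_im, ← Complex.ofReal_add, Complex.sin_ofReal_re, Complex.cos_ofReal_im] using this
  ext i
  fin_cases i
  · simpa [unitVec] using h0
  · simpa [unitVec] using h1'

lemma inner_expand (d₁ d₂ : Plane) (hd₁ : ‖d₁‖ = 1) (hd₂ : ‖d₂‖ = 1) (s t s' t' : ℝ) :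
    ⟪s•d₁ + t•d₂, s'•d₁ + t'•d₂⟫ = s*s' + t*t' + (s*t' + s'*t)*⟪d₁,d₂⟫ := by
  have h1 : ⟪d₁,d₁⟫ = 1 := by rw [real_inner_self_eq_norm_sq, hd₁]; norm_num
  have h2 : ⟪d₂,d₂⟫ = 1 := by rw [real_inner_self_eq_norm_sq, hd₂]; norm_num
  have h3 : ⟪d₂,d₁⟫ = ⟪d₁,d₂⟫ := real_inner_comm _ _
  simp only [inner_add_left, inner_add_right, real_inner_smul_left, real_inner_smul_right,
    h1, h2, h3]
  ring

lemma angle_le_of_mem_wedge (d₁ d₂ : Plane) (hd₁ : ‖d₁‖ = 1) (hd₂ : ‖d₂‖ = 1) (ω : ℝ)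
    (hω : ω ∈ Set.Ioo 0 π) (hang : InnerProductGeometry.angle d₁ d₂ = ω)
    (u w : Plane) (hu : u ≠ 0) (hw : w ≠ 0) (s₁ t₁ s₂ t₂ : ℝ)
    (hs₁ : 0 ≤ s₁) (ht₁ : 0 ≤ t₁) (hs₂ : 0 ≤ s₂) (ht₂ : 0 ≤ t₂)
    (hu' : u = s₁•d₁ + t₁•d₂) (hw' : w = s₂•d₁ + t₂•d₂) :
    InnerProductGeometry.angle u w ≤ ω := by
  have hc : ⟪d₁,d₂⟫ = Real.cos ω := by
    have := InnerProductGeometry.cos_angle d₁ d₂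
    rw [hang, hd₁, hd₂] at this
    simpa using this.symm
  have hp2 : ‖u‖^2 = s₁^2 + t₁^2 + 2*s₁*t₁*Real.cos ω := by
    rw [← real_inner_self_eq_norm_sq, hu', inner_expand d₁ d₂ hd₁ hd₂, hc]; ring
  have hq2 : ‖w‖^2 = s₂^2 + t₂^2 + 2*s₂*t₂*Real.cos ω := by
    rw [← real_inner_self_eq_norm_sq, hw', inner_expand d₁ d₂ hd₁ hd₂, hc]; ring
  have hiuw : ⟪u,w⟫ = s₁*s₂ + t₁*t₂ + (s₁*t₂ + s₂*t₁)*Real.cos ω := by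
    rw [hu', hw', inner_expand d₁ d₂ hd₁ hd₂, hc]
  have hkey := key_ineq s₁ t₁ s₂ t₂ (Real.cos ω) ‖u‖ ‖w‖ hs₁ ht₁ hs₂ ht₂
    (Real.neg_one_le_cos ω) (Real.cos_le_one ω) (norm_nonneg u) (norm_nonneg w) hp2 hq2
  have hnu : 0 < ‖u‖ := norm_pos_iff.2 hu
  have hnw : 0 < ‖w‖ := norm_pos_iff.2 hw
  rw [InnerProductGeometry.angle]
  calc Real.arccos (⟪u,w⟫ / (‖u‖ * ‖w‖)) ≤ Real.arccos (Real.cos ω) := by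
        apply arccos_le_arccos'
        rw [le_div_iff₀ (by positivity)]
        rw [hiuw]
        linarith
    _ = ω := Real.arccos_cos hω.1.le hω.2.le

lemma combo_cos (a ψ ω : ℝ) :
    Real.sin (ω-ψ) * Real.cos a + Real.sin ψ * Real.cos (a+ω) = Real.sin ω * Real.cos (a+ψ) := by
  rw [Real.sin_sub, Real.cos_add, Real.cos_add]; ring

lemma combo_sin (a ψ ω : ℝ) :
    Real.sin (ω-ψ) * Real.sin a + Real.sin ψ * Real.sin (a+ω) = Real.sin ω * Real.sin (a+ψ) := by
  rw [Real.sin_sub, Real.sin_add, Real.sin_add]; ring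

lemma unitVec_combo (a ψ ω r : ℝ) (hsin : Real.sin ω ≠ 0) :
    r • unitVec (a + ψ)
      = (r * Real.sin (ω-ψ) / Real.sin ω) • unitVec a
        + (r * Real.sin ψ / Real.sin ω) • unitVec (a+ω) := by
  apply PiLp.ext
  rw [Fin.forall_fin_two]
  constructor
  · show r * Real.cos (a+ψ) = _
    have h : (((r * Real.sin (ω-ψ) / Real.sin ω) • unitVec a
        + (r * Real.sin ψ / Real.sin ω) • unitVec (a+ω)) : Plane) 0
        = r * Real.sin (ω-ψ) / Real.sin ω * Real.cos a
          + r * Real.sin ψ / Real.sin ω * Real.cos (a+ω) := rfl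
    rw [h]
    field_simp
    linear_combination (-r) * combo_cos a ψ ω
  · show r * Real.sin (a+ψ) = _
    have h : (((r * Real.sin (ω-ψ) / Real.sin ω) • unitVec a
        + (r * Real.sin ψ / Real.sin ω) • unitVec (a+ω)) : Plane) 1
        = r * Real.sin (ω-ψ) / Real.sin ω * Real.sin a
          + r * Real.sin ψ / Real.sin ω * Real.sin (a+ω) := rfl
    rw [h]
    field_simp
    linear_combination (-r) * combo_sin a ψ ω

lemma euc_angle_eq (a v b : Plane) :
    EuclideanGeometry.angle a v b = InnerProductGeometry.angle (a - v) (b - v) := by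
  simp [EuclideanGeometry.angle, vsub_eq_sub]

end Aux

lemma convex_wedge (x d₁ d₂ : Plane) : Convex ℝ (wedgeSet x d₁ d₂) := by
  rintro p ⟨s₁, t₁, hs₁, ht₁, rfl⟩ q ⟨s₂, t₂, hs₂, ht₂, rfl⟩ a b ha hb hab
  refine ⟨a*s₁ + b*s₂, a*t₁ + b*t₂, by positivity, by positivity, ?_⟩
  match_scalars <;> first | ring1 | linarith

/-- A vertex `v` of a convex polygon lies on the `ω`-cloud (i.e. is the apex of some
minimal `ω`-wedge) if and only if its interior angle is at most `ω`. -/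
theorem stmt_3 (V : Finset Plane) (hV : IsConvexPolygon V) (ω : ℝ) (hω : ω ∈ Set.Ioo 0 π)
    (v : Plane) (hv : v ∈ V) :
    v ∈ omegaCloud (convexHull ℝ (V : Set Plane)) ω ↔
      interiorAngle (convexHull ℝ (V : Set Plane)) v ≤ ω := by
  have hvP : v ∈ convexHull ℝ (V : Set Plane) := subset_convexHull ℝ _ (Finset.mem_coe.2 hv)
  constructor
  · rintro ⟨d₁, d₂, hn1, hn2, hang, hsub, -, -⟩
    unfold interiorAngle
    apply Real.sSup_le _ hω.1.le
    rintro θ ⟨a, ha, b, hb, hav, hbv, rfl⟩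
    obtain ⟨s₁, t₁, hs₁, ht₁, ha'⟩ := hsub ha
    obtain ⟨s₂, t₂, hs₂, ht₂, hb'⟩ := hsub hb
    rw [euc_angle_eq]
    exact angle_le_of_mem_wedge d₁ d₂ hn1 hn2 ω hω hang (a - v) (b - v)
      (sub_ne_zero.2 hav) (sub_ne_zero.2 hbv) s₁ t₁ s₂ t₂ hs₁ ht₁ hs₂ ht₂
      (by rw [ha']; abel) (by rw [hb']; abel)
  · intro hA
    have hbdd : BddAbove {θ : ℝ | ∃ a ∈ convexHull ℝ (V : Set Plane),
        ∃ b ∈ convexHull ℝ (V : Set Plane), a ≠ v ∧ b ≠ v ∧ θ = EuclideanGeometry.angle a v b} := by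
      refine ⟨π, ?_⟩
      rintro θ ⟨a, -, b, -, -, -, rfl⟩
      rw [euc_angle_eq]
      exact InnerProductGeometry.angle_le_pi _ _
    have hWne : (V.erase v).Nonempty := by
      rw [← Finset.card_pos, Finset.card_erase_of_mem hv]
      have := hV.1; omega
    obtain ⟨f, u, hfv, hfb⟩ := geometric_hahn_banach_point_closed
      (convex_convexHull ℝ ((V.erase v : Finset Plane) : Set Plane))
      ((V.erase v).finite_toSet.isCompact_convexHull (𝕜 := ℝ)).isClosed (hV.2 v hv)
    set c0 : ℝ := f ((WithLp.equiv 2 (Fin 2 → ℝ)).symm ![1, 0]) with hc0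
    set c1 : ℝ := f ((WithLp.equiv 2 (Fin 2 → ℝ)).symm ![0, 1]) with hc1
    have hfx : ∀ x : Plane, f x = c0 * x 0 + c1 * x 1 := by
      intro x
      have hxd : x = x 0 • ((WithLp.equiv 2 (Fin 2 → ℝ)).symm ![1,0])
          + x 1 • ((WithLp.equiv 2 (Fin 2 → ℝ)).symm ![0,1]) := by
        apply PiLp.ext
        rw [Fin.forall_fin_two]
        constructor <;> simp [WithLp.equiv_symm_apply]
      conv_lhs => rw [hxd]
      rw [map_add, map_smul, map_smul, ← hc0, ← hc1]
      simp [smul_eq_mul]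
      ring
    have hfw : ∀ w ∈ V.erase v, 0 < f w - f v := by
      intro w hw
      have h1 : u < f w := hfb w (subset_convexHull ℝ _ (Finset.mem_coe.2 hw))
      linarith
    have hz0 : (c0 : ℂ) + c1 * Complex.I ≠ 0 := by
      intro h
      simp only [Complex.ext_iff, Complex.add_re, Complex.add_im, Complex.ofReal_re,
        Complex.ofReal_im, Complex.mul_re, Complex.mul_im, Complex.I_re, Complex.I_im,
        Complex.zero_re, Complex.zero_im] at h
      obtain ⟨w, hw⟩ := hWne
      have h2 := hfw w hw
      rw [hfx w, hfx v] at h2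
      have hc00 : c0 = 0 := by linarith [h.1]
      have hc10 : c1 = 0 := by linarith [h.2]
      rw [hc00, hc10] at h2
      simp at h2
    set ν : ℝ := Complex.arg ((c0 : ℂ) + c1 * Complex.I) with hν
    set ρ : ℝ := ‖(c0 : ℂ) + c1 * Complex.I‖ with hρ
    have hρpos : 0 < ρ := norm_pos_iff.mpr hz0
    have hcosν : Real.cos ν = c0 / ρ := by
      rw [hν, hρ, Complex.cos_arg hz0]; simp
    have hsinν : Real.sin ν = c1 / ρ := by
      rw [hν, hρ, Complex.sin_arg]; simp
    have hpos : ∀ w ∈ V.erase v, 0 < Real.cos ν * (w - v) 0 + Real.sin ν * (w - v) 1 := by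
      intro w hw
      have h2 := hfw w hw
      rw [hfx w, hfx v] at h2
      have hsub0 : (w - v) 0 = w 0 - v 0 := rfl
      have hsub1 : (w - v) 1 = w 1 - v 1 := rfl
      rw [hsub0, hsub1, hcosν, hsinν]
      have key : c0/ρ*(w 0 - v 0) + c1/ρ*(w 1 - v 1)
          = (c0 * w 0 + c1 * w 1 - (c0 * v 0 + c1 * v 1))/ρ := by
        field_simp; ring
      rw [key]
      exact div_pos (by linarith) hρpos
    choose! r β hr hβ hwe using fun w hw => exists_polar ν (w - v) (hpos w hw)
    have hangle : ∀ w ∈ V.erase v, ∀ w' ∈ V.erase v, |β w - β w'| ≤ ω := by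
      intro w hw w' hw'
      have b1 := abs_lt.1 (hβ w hw)
      have b2 := abs_lt.1 (hβ w' hw')
      have habs : |β w - β w'| ≤ π := by
        rw [abs_le]; constructor <;> linarith
      have h1 : InnerProductGeometry.angle (w - v) (w' - v) = |β w - β w'| := by
        rw [hwe w hw, hwe w' hw',
          InnerProductGeometry.angle_smul_left_of_pos _ _ (hr w hw),
          InnerProductGeometry.angle_smul_right_of_pos _ _ (hr w' hw'),
          angle_unitVec (by rw [show ν + β w - (ν + β w') = β w - β w' by ring]; exact habs),
          show ν + β w - (ν + β w') = β w - β w' by ring]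
      have h2 : EuclideanGeometry.angle w v w' ≤ interiorAngle (convexHull ℝ (V : Set Plane)) v := by
        apply le_csSup hbdd
        exact ⟨w, subset_convexHull ℝ _ (Finset.mem_coe.2 (Finset.mem_of_mem_erase hw)),
          w', subset_convexHull ℝ _ (Finset.mem_coe.2 (Finset.mem_of_mem_erase hw')),
          Finset.ne_of_mem_erase hw, Finset.ne_of_mem_erase hw', rfl⟩
      rw [euc_angle_eq, h1] at h2
      linarith
    obtain ⟨wm, hwm, hm⟩ := Finset.exists_mem_eq_inf' hWne β
    have hmle : ∀ w ∈ V.erase v, β wm ≤ β w := fun w hw => hm ▸ Finset.inf'_le β hw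
    have hsinω : 0 < Real.sin ω := Real.sin_pos_of_pos_of_lt_pi hω.1 hω.2
    refine ⟨unitVec (ν + β wm), unitVec (ν + β wm + ω), norm_unitVec _, norm_unitVec _, ?_, ?_,
      ⟨v, hvP, 0, le_refl 0, by rw [zero_smul, add_zero]⟩,
      ⟨v, hvP, 0, le_refl 0, by rw [zero_smul, add_zero]⟩⟩
    · rw [angle_unitVec (by
        rw [show ν + β wm - (ν + β wm + ω) = -ω by ring, abs_neg, abs_of_pos hω.1]
        exact hω.2.le)]
      rw [show ν + β wm - (ν + β wm + ω) = -ω by ring, abs_neg, abs_of_pos hω.1]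
    · apply convexHull_min _ (convex_wedge v _ _)
      intro w hw
      rcases eq_or_ne w v with rfl | hne
      · exact ⟨0, 0, le_refl 0, le_refl 0, by rw [zero_smul, zero_smul, add_zero, add_zero]⟩
      · have hwE : w ∈ V.erase v := Finset.mem_erase.2 ⟨hne, Finset.mem_coe.1 hw⟩
        have hψ0 : 0 ≤ β w - β wm := by linarith [hmle w hwE]
        have hψω : β w - β wm ≤ ω := by
          have h3 := abs_le.1 (hangle w hwE wm hwm)
          linarith [h3.2]
        refine ⟨r w * Real.sin (ω - (β w - β wm)) / Real.sin ω,
          r w * Real.sin (β w - β wm) / Real.sin ω, ?_, ?_, ?_⟩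
        · apply div_nonneg _ hsinω.le
          exact mul_nonneg (hr w hwE).le
            (Real.sin_nonneg_of_nonneg_of_le_pi (by linarith) (by linarith [hω.2]))
        · apply div_nonneg _ hsinω.le
          exact mul_nonneg (hr w hwE).le
            (Real.sin_nonneg_of_nonneg_of_le_pi (by linarith) (by linarith [hω.2]))
        · have hwv : w - v = (r w * Real.sin (ω - (β w - β wm)) / Real.sin ω) • unitVec (ν + β wm)
              + (r w * Real.sin (β w - β wm) / Real.sin ω) • unitVec (ν + β wm + ω) := by
            rw [hwe w hwE, show ν + β w = (ν + β wm) + (β w - β wm) by ring]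
            exact unitVec_combo (ν + β wm) (β w - β wm) ω (r w) hsinω.ne'
          rw [add_assoc]
          exact sub_eq_iff_eq_add'.1 hwv

end
end

section
/- Hidden pivots can exist only when ω ≥ π/2: if ω < π/2, then no two consecutive arcs of the ω-cloud of a convex polygon lie on the same supporting circle. -/
open EuclideanGeometry Real Set
open scoped Classical

noncomputable section

/-! ### Auxiliary lemmas for `stmt_12` -/

section Aux

lemma analyticAt_rcos (x : ℝ) : AnalyticAt ℝ Real.cos x := by
  have h1 : AnalyticAt ℝ (fun t : ℝ => Complex.cos (Complex.ofRealCLM t)) x :=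
    ((Complex.differentiable_cos.analyticAt _).restrictScalars).comp (Complex.ofRealCLM.analyticAt x)
  have h2 : Real.cos = fun t : ℝ => Complex.reCLM (Complex.cos (Complex.ofRealCLM t)) := by
    funext t; simp [Complex.cos_ofReal_re]
  rw [h2]; exact (Complex.reCLM.analyticAt _).comp h1

lemma analyticAt_rsin (x : ℝ) : AnalyticAt ℝ Real.sin x := by
  have h1 : AnalyticAt ℝ (fun t : ℝ => Complex.sin (Complex.ofRealCLM t)) x :=
    ((Complex.differentiable_sin.analyticAt _).restrictScalars).comp (Complex.ofRealCLM.analyticAt x)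
  have h2 : Real.sin = fun t : ℝ => Complex.reCLM (Complex.sin (Complex.ofRealCLM t)) := by
    funext t; simp [Complex.sin_ofReal_re]
  rw [h2]; exact (Complex.reCLM.analyticAt _).comp h1

/-- Identity theorem specialization: an analytic function on `ℝ`
vanishing on a nonempty open interval vanishes everywhere. -/
lemma zero_of_interval {F : ℝ → ℝ} (hF : AnalyticOnNhd ℝ F univ) {a b : ℝ} (hab : a < b)
    (hz : ∀ θ ∈ Set.Ioo a b, F θ = 0) (θ : ℝ) : F θ = 0 := by
  have hmem : (a+b)/2 ∈ Set.Ioo a b := by constructor <;> linarith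
  have hev : F =ᶠ[nhds ((a+b)/2)] 0 := by
    filter_upwards [isOpen_Ioo.mem_nhds hmem] with t ht using hz t ht
  exact hF.eqOn_zero_of_preconnected_of_eventuallyEq_zero isPreconnected_univ (mem_univ _) hev
    (mem_univ θ)

/-- Rigidity: if two vectors inside a wedge of opening angle `arccos k` (with `0 < k < 1`)
make that same angle with each other, they lie on the two arms. -/
lemma rig (a b c e k : ℝ) (ha : 0 ≤ a) (hb : 0 ≤ b) (hc : 0 ≤ c) (he : 0 ≤ e)
    (h0 : 0 < k) (h1 : k < 1)
    (heq : (a*c + b*e + (a*e + b*c)*k)^2 = k^2 * ((a^2+b^2+2*a*b*k) * (c^2+e^2+2*c*e*k)))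
    (hu : ¬(a = 0 ∧ b = 0)) (hv : ¬(c = 0 ∧ e = 0)) :
    (b = 0 ∧ c = 0) ∨ (a = 0 ∧ e = 0) := by
  have hk2 : 0 < 1 - k^2 := by nlinarith
  have hN : (a^2+b^2+2*a*b*k)*(c^2+e^2+2*c*e*k) = (a*e-b*c)^2 := by
    have h2 : (1 - k^2) * ((a^2+b^2+2*a*b*k)*(c^2+e^2+2*c*e*k) - (a*e-b*c)^2) = 0 := by
      linear_combination heq
    rcases mul_eq_zero.1 h2 with h | h
    · linarith
    · linarith
  have hdotnn : 0 ≤ a*c + b*e + (a*e + b*c)*k := by positivity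
  have hd2 : (a*c + b*e + (a*e + b*c)*k)^2 = k^2*(a*e-b*c)^2 := by rw [heq, hN]
  have hMnn : 0 ≤ k*(a*e+b*c) := by positivity
  have hle : a*c + b*e + (a*e + b*c)*k ≤ k*(a*e+b*c) := by
    nlinarith [hd2, hdotnn, hMnn, mul_nonneg (mul_nonneg ha he) (mul_nonneg hb hc), sq_nonneg k]
  have hac : a*c = 0 ∧ b*e = 0 := by
    constructor <;> nlinarith [mul_nonneg ha hc, mul_nonneg hb he]
  rcases hac with ⟨hac, hbe⟩
  rcases mul_eq_zero.1 hac with h | h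
  · right
    refine ⟨h, ?_⟩
    have hbne : b ≠ 0 := fun hb0 => hu ⟨h, hb0⟩
    rcases mul_eq_zero.1 hbe with h' | h'
    · exact absurd h' hbne
    · exact h'
  · left
    refine ⟨?_, h⟩
    rcases mul_eq_zero.1 hbe with h' | h'
    · exact h'
    · exact absurd ⟨h, h'⟩ hv

/-- Three pairwise distinct collinear points cannot all lie on a circle. -/
lemma circle3 (O x₁ x₂ x₃ : Plane) (r : ℝ)
    (h1 : (inner ℝ (x₁-O) (x₁-O) : ℝ) = r^2) (h2 : (inner ℝ (x₂-O) (x₂-O) : ℝ) = r^2)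
    (h3 : (inner ℝ (x₃-O) (x₃-O) : ℝ) = r^2)
    (h12 : x₁ ≠ x₂) (h13 : x₁ ≠ x₃) (h23 : x₂ ≠ x₃)
    (μ : ℝ) (hμ : x₃ = x₁ + μ • (x₂ - x₁)) : False := by
  set w₁ : Plane := x₁ - O with hw1
  set w₂ : Plane := x₂ - O with hw2
  have hdiff : w₁ - w₂ ≠ 0 := by
    intro h
    exact h12 (by have : w₁ = w₂ := sub_eq_zero.1 h
                  simpa [hw1, hw2, sub_left_inj] using this)
  have hpos : (0:ℝ) < inner ℝ (w₁ - w₂) (w₁ - w₂) := by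
    rcases lt_or_eq_of_le (real_inner_self_nonneg (x := w₁ - w₂)) with h | h
    · exact h
    · exact absurd (inner_self_eq_zero.1 h.symm) hdiff
  have hip : (inner ℝ w₁ w₂ : ℝ) < r^2 := by
    have hexp : (inner ℝ (w₁ - w₂) (w₁ - w₂) : ℝ)
        = inner ℝ w₁ w₁ + inner ℝ w₂ w₂ - 2 * inner ℝ w₁ w₂ := by
      simp only [inner_sub_left, inner_sub_right, real_inner_comm]; ring
    rw [hexp, h1, h2] at hpos
    linarith
  have hw3 : x₃ - O = w₁ + μ • (w₂ - w₁) := by rw [hμ, hw1, hw2]; module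
  have hexp3 : (inner ℝ (x₃-O) (x₃-O) : ℝ)
      = (1-μ)^2 * inner ℝ w₁ w₁ + μ^2 * inner ℝ w₂ w₂ + 2*μ*(1-μ) * inner ℝ w₁ w₂ := by
    rw [hw3]
    simp only [inner_add_left, inner_add_right, inner_sub_left, inner_sub_right,
      real_inner_smul_left, real_inner_smul_right, real_inner_comm]
    ring
  rw [hexp3, h1, h2] at h3
  have hμ0 : μ * (1-μ) * (r^2 - inner ℝ w₁ w₂) = 0 := by linarith [h3]
  have : μ = 0 ∨ μ = 1 := by
    rcases mul_eq_zero.1 hμ0 with h | h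
    · rcases mul_eq_zero.1 h with h' | h'
      · exact Or.inl h'
      · exact Or.inr (by linarith)
    · exact absurd h (by intro hh; nlinarith)
  rcases this with h | h
  · exact h13 (by rw [hμ, h]; simp)
  · exact h23 (show x₂ = x₃ by rw [hμ, h]; module)

/-- If infinitely many points of a circle see `p` and `p'` in the same direction,
then `p = p'`. -/
lemma collinear_contra (O : Plane) (r : ℝ) (p p' : Plane) (S : Set Plane)
    (hS : S.Infinite) (hcirc : ∀ x ∈ S, (inner ℝ (x-O) (x-O) : ℝ) = r^2)
    (hlin : ∀ x ∈ S, ∃ l : ℝ, 0 < l ∧ p - x = l • (p' - x)) : p = p' := by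
  by_contra hpp
  obtain ⟨x₁, hx₁⟩ := hS.nonempty
  obtain ⟨x₂, hx₂⟩ := (hS.diff (Set.finite_singleton x₁)).nonempty
  obtain ⟨x₃, hx₃⟩ := (hS.diff (Set.toFinite {x₁, x₂})).nonempty
  obtain ⟨hx₂S, hx₂1⟩ := hx₂
  obtain ⟨hx₃S, hx₃12⟩ := hx₃
  simp only [mem_singleton_iff] at hx₂1
  simp only [mem_insert_iff, mem_singleton_iff, not_or] at hx₃12
  have param : ∀ x ∈ S, ∃ t : ℝ, x = p + t • (p - p') := by
    intro x hx
    obtain ⟨l, hl, hpx⟩ := hlin x hx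
    have hl1 : l ≠ 1 := by
      intro h; rw [h, one_smul] at hpx
      exact hpp (sub_left_inj.1 hpx)
    refine ⟨l / (1 - l), ?_⟩
    have h1l : (1 - l) ≠ 0 := fun h => hl1 (by linarith)
    have h2 : (1 - l) • x = p - l • p' := by
      have h := sub_eq_zero.2 hpx
      rw [← sub_eq_zero]
      have h5 : (1 - l) • x - (p - l • p') = -((p - x) - l • (p' - x)) := by module
      rw [h5, h, neg_zero]
    have h4 : x = (1 - l)⁻¹ • ((1 - l) • x) := by
      rw [smul_smul, inv_mul_cancel₀ h1l, one_smul]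
    rw [h4, h2]
    match_scalars <;> field_simp <;> ring
  obtain ⟨t₁, e₁⟩ := param x₁ hx₁
  obtain ⟨t₂, e₂⟩ := param x₂ hx₂S
  obtain ⟨t₃, e₃⟩ := param x₃ hx₃S
  have ht12 : t₁ ≠ t₂ := fun h => hx₂1 (by rw [e₂, e₁, h])
  have ht13 : t₁ ≠ t₃ := fun h => hx₃12.1 (by rw [e₃, e₁, h])
  have ht23 : t₂ ≠ t₃ := fun h => hx₃12.2 (by rw [e₃, e₂, h])
  set μ : ℝ := (t₃ - t₁) / (t₂ - t₁) with hμdef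
  have h21 : t₂ - t₁ ≠ 0 := fun h => ht12 (by linarith)
  have hμ : x₃ = x₁ + μ • (x₂ - x₁) := by
    rw [e₁, e₂, e₃]
    have hcμ : t₁ + μ * (t₂ - t₁) = t₃ := by rw [hμdef]; field_simp; ring
    have h5 : p + t₁ • (p - p') + μ • (p + t₂ • (p - p') - (p + t₁ • (p - p')))
        = p + (t₁ + μ * (t₂ - t₁)) • (p - p') := by module
    rw [h5, hcμ]
  exact circle3 O x₁ x₂ x₃ r (hcirc x₁ hx₁) (hcirc x₂ hx₂S) (hcirc x₃ hx₃S)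
    (fun h => hx₂1 h.symm) (fun h => hx₃12.1 h.symm) (fun h => hx₃12.2 h.symm) μ hμ

lemma unitVec_inj {θ θ' : ℝ} (h : unitVec θ = unitVec θ') (hd : |θ - θ'| < 2*π) : θ = θ' := by
  have h0 : Real.cos θ = Real.cos θ' := by
    have := congrFun (congrArg (WithLp.equiv 2 (Fin 2 → ℝ)) h) 0
    simpa [unitVec] using this
  have h1 : Real.sin θ = Real.sin θ' := by
    have := congrFun (congrArg (WithLp.equiv 2 (Fin 2 → ℝ)) h) 1
    simpa [unitVec] using this
  have hcos1 : Real.cos (θ - θ') = 1 := by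
    rw [Real.cos_sub, h0, h1]
    nlinarith [Real.sin_sq_add_cos_sq θ']
  obtain ⟨n, hn⟩ := (Real.cos_eq_one_iff _).1 hcos1
  have hpi := Real.pi_pos
  have : n = 0 := by
    rcases lt_trichotomy n 0 with hn0 | hn0 | hn0
    · exfalso
      have h1' : (n:ℝ) ≤ -1 := by exact_mod_cast Int.le_sub_one_of_lt hn0
      have : θ - θ' ≤ -1 * (2*π) := by rw [← hn]; nlinarith
      rw [abs_lt] at hd; linarith
    · exact hn0
    · exfalso
      have h1' : (1:ℝ) ≤ (n:ℝ) := by exact_mod_cast hn0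
      have : 1 * (2*π) ≤ θ - θ' := by rw [← hn]; nlinarith
      rw [abs_lt] at hd; linarith
  rw [this] at hn; simp at hn; linarith

lemma inner_eq_cos {d₁ d₂ : Plane} (h1 : ‖d₁‖ = 1) (h2 : ‖d₂‖ = 1) {ω : ℝ}
    (hang : InnerProductGeometry.angle d₁ d₂ = ω) : (inner ℝ d₁ d₂ : ℝ) = Real.cos ω := by
  have hb : |(inner ℝ d₁ d₂ : ℝ)| ≤ 1 := by
    have := abs_real_inner_le_norm d₁ d₂
    rwa [h1, h2, mul_one] at this
  rw [abs_le] at hb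
  have : Real.arccos (inner ℝ d₁ d₂ : ℝ) = ω := by
    rw [InnerProductGeometry.angle, h1, h2] at hang
    simpa using hang
  rw [← this, Real.cos_arccos hb.1 hb.2]

end Aux

set_option maxHeartbeats 2000000 in
/-- If `ω < π/2`, the `ω`-cloud of a convex polygon has no hidden pivots: two consecutive
arcs meeting at a pivot (where the contact pair changes) cannot lie on the same supporting
circle. -/
theorem stmt_12 (V : Finset Plane) (hV : IsConvexPolygon V) (ω : ℝ)
    (hω : 0 < ω) (hω' : ω < π / 2) (A B : CircArc)
    (hpropA : 0 < A.radius ∧ 0 < A.delta) (hpropB : 0 < B.radius ∧ 0 < B.delta)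
    (hsubA : A.points ⊆ omegaCloud (convexHull ℝ (V : Set Plane)) ω)
    (hsubB : B.points ⊆ omegaCloud (convexHull ℝ (V : Set Plane)) ω)
    (hAB : A.cwEnd = B.cwStart)
    (hdisj : Disjoint A.intPoints B.intPoints)
    (p q p' q' : Plane) (hp : p ∈ V) (hq : q ∈ V) (hp' : p' ∈ V) (hq' : q' ∈ V)
    (hcA : ContactPair (convexHull ℝ (V : Set Plane)) ω A p q)
    (hcB : ContactPair (convexHull ℝ (V : Set Plane)) ω B p' q')
    (hne : ¬((p' = p ∧ q' = q) ∨ (p' = q ∧ q' = p))) :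
    ¬(A.center = B.center ∧ A.radius = B.radius) := by
  rintro ⟨hcc, hrr⟩
  obtain ⟨hrA, hdA⟩ := hpropA
  obtain ⟨hrB, hdB⟩ := hpropB
  have hpi := Real.pi_pos
  set c₀ := Real.cos ω with hc₀def
  have hc0pos : 0 < c₀ := Real.cos_pos_of_mem_Ioo ⟨by linarith, hω'⟩
  have hc0lt : c₀ < 1 := by
    rcases lt_or_eq_of_le (Real.cos_le_one ω) with h | h
    · exact h
    · exfalso
      obtain ⟨n, hn⟩ := (Real.cos_eq_one_iff ω).1 h
      rcases lt_trichotomy n 0 with hn0 | hn0 | hn0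
      · have h1 : (n:ℝ) ≤ -1 := by exact_mod_cast Int.le_sub_one_of_lt hn0
        nlinarith
      · rw [hn0] at hn; simp at hn; linarith
      · have h1 : (1:ℝ) ≤ (n:ℝ) := by exact_mod_cast hn0
        nlinarith
  set P := convexHull ℝ (V : Set Plane) with hPdef
  set xθ : ℝ → Plane := fun θ => A.center + A.radius • unitVec θ with hxθ
  set F : ℝ → ℝ := fun θ =>
    (inner ℝ (p - xθ θ) (q - xθ θ) : ℝ)^2
      - c₀^2 * ((inner ℝ (p - xθ θ) (p - xθ θ) : ℝ) * (inner ℝ (q - xθ θ) (q - xθ θ) : ℝ))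
    with hFdef
  -- Step 1: F vanishes on the parameter interval of the arc A
  have hFA : ∀ θ ∈ Set.Ioo A.start (A.start + A.delta), F θ = 0 := by
    intro θ hθ
    have hxmem : xθ θ ∈ A.intPoints := ⟨θ, hθ, by simp only [hxθ]⟩
    obtain ⟨d₁, d₂, ⟨hn1, hn2, hang, hsub, -, -⟩, hpr, hqr⟩ := hcA _ hxmem
    obtain ⟨t, ht, hpt⟩ := hpr
    obtain ⟨s, hs, hqs⟩ := hqr
    have h12 : (inner ℝ d₁ d₂ : ℝ) = c₀ := inner_eq_cos hn1 hn2 hang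
    have h11 : (inner ℝ d₁ d₁ : ℝ) = 1 := by
      rw [real_inner_self_eq_norm_sq, hn1]; norm_num
    have h22 : (inner ℝ d₂ d₂ : ℝ) = 1 := by
      rw [real_inner_self_eq_norm_sq, hn2]; norm_num
    have hpe : p - xθ θ = t • d₁ := by rw [hpt]; abel
    have hqe : q - xθ θ = s • d₂ := by rw [hqs]; abel
    simp only [hFdef]
    rw [hpe, hqe]
    simp only [real_inner_smul_left, real_inner_smul_right, h12, h11, h22]
    ring
  -- Step 2: F is analytic, hence vanishes everywhere
  have hFcoord : F = fun θ =>
      ((p 0 - (A.center 0 + A.radius * Real.cos θ)) * (q 0 - (A.center 0 + A.radius * Real.cos θ))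
        + (p 1 - (A.center 1 + A.radius * Real.sin θ)) * (q 1 - (A.center 1 + A.radius * Real.sin θ)))^2
      - c₀^2 * (((p 0 - (A.center 0 + A.radius * Real.cos θ))^2
            + (p 1 - (A.center 1 + A.radius * Real.sin θ))^2)
        * ((q 0 - (A.center 0 + A.radius * Real.cos θ))^2
            + (q 1 - (A.center 1 + A.radius * Real.sin θ))^2)) := by
    funext θ
    simp only [hFdef, hxθ, PiLp.inner_apply, RCLike.inner_apply, conj_trivial, Fin.sum_univ_two,
      PiLp.sub_apply, PiLp.add_apply, PiLp.smul_apply, smul_eq_mul, unitVec,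
      WithLp.equiv_symm_apply, PiLp.toLp_apply, Matrix.cons_val_zero, Matrix.cons_val_one, Matrix.head_cons]
    ring
  have hFan : AnalyticOnNhd ℝ F univ := by
    rw [hFcoord]
    intro x _
    have hcx := analyticAt_rcos x
    have hsx := analyticAt_rsin x
    have h1 : AnalyticAt ℝ (fun θ : ℝ => p 0 - (A.center 0 + A.radius * Real.cos θ)) x :=
      analyticAt_const.sub (analyticAt_const.add (analyticAt_const.mul hcx))
    have h2 : AnalyticAt ℝ (fun θ : ℝ => p 1 - (A.center 1 + A.radius * Real.sin θ)) x :=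
      analyticAt_const.sub (analyticAt_const.add (analyticAt_const.mul hsx))
    have h3 : AnalyticAt ℝ (fun θ : ℝ => q 0 - (A.center 0 + A.radius * Real.cos θ)) x :=
      analyticAt_const.sub (analyticAt_const.add (analyticAt_const.mul hcx))
    have h4 : AnalyticAt ℝ (fun θ : ℝ => q 1 - (A.center 1 + A.radius * Real.sin θ)) x :=
      analyticAt_const.sub (analyticAt_const.add (analyticAt_const.mul hsx))
    exact (((h1.mul h3).add (h2.mul h4)).pow 2).sub
      (analyticAt_const.mul (((h1.pow 2).add (h2.pow 2)).mul ((h3.pow 2).add (h4.pow 2))))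
  have hF0 : ∀ θ, F θ = 0 := zero_of_interval hFan (by linarith) hFA
  -- Step 3: the B-side parameter interval
  set ℓ : ℝ := min B.delta (2*π) with hℓdef
  have hℓpos : 0 < ℓ := lt_min hdB (by linarith)
  have hℓle : ℓ ≤ 2*π := min_le_right _ _
  have hIsub : Set.Ioo B.start (B.start + ℓ) ⊆ Set.Ioo B.start (B.start + B.delta) :=
    Set.Ioo_subset_Ioo le_rfl (add_le_add_right (min_le_left _ _) _)
  have hinj : Set.InjOn xθ (Set.Ioo B.start (B.start + ℓ)) := by
    intro θ hθ θ' hθ' heq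
    have h1 : A.radius • unitVec θ = A.radius • unitVec θ' := by
      have := heq
      simp only [hxθ] at this
      exact add_left_cancel this
    have h2 : unitVec θ = unitVec θ' := smul_right_injective Plane (ne_of_gt hrA) h1
    apply unitVec_inj h2
    rw [abs_lt]
    obtain ⟨ha1, ha2⟩ := hθ
    obtain ⟨hb1, hb2⟩ := hθ'
    constructor <;> linarith
  set G : Set Plane := (xθ '' Set.Ioo B.start (B.start + ℓ)) \ {p, q, p', q'} with hGdef
  have hGinf : G.Infinite :=
    ((Set.infinite_coe_iff.1 (Set.Ioo.infinite (by linarith))).image hinj).diff (Set.toFinite _)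
  have hcirc : ∀ x ∈ xθ '' Set.Ioo B.start (B.start + ℓ),
      (inner ℝ (x - A.center) (x - A.center) : ℝ) = A.radius^2 := by
    rintro x ⟨θ, -, rfl⟩
    simp only [hxθ, PiLp.inner_apply, RCLike.inner_apply, conj_trivial, Fin.sum_univ_two,
      PiLp.sub_apply, PiLp.add_apply, PiLp.smul_apply, smul_eq_mul, unitVec,
      WithLp.equiv_symm_apply, PiLp.toLp_apply, Matrix.cons_val_zero, Matrix.cons_val_one, Matrix.head_cons]
    nlinarith [Real.sin_sq_add_cos_sq θ]
  -- Step 4: on each point of G, the contact rays line up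
  have hmain : ∀ x ∈ G,
      ((∃ l : ℝ, 0 < l ∧ p - x = l • (p' - x)) ∧ (∃ l : ℝ, 0 < l ∧ q - x = l • (q' - x)))
      ∨ ((∃ l : ℝ, 0 < l ∧ p - x = l • (q' - x)) ∧ (∃ l : ℝ, 0 < l ∧ q - x = l • (p' - x))) := by
    rintro x ⟨⟨θ, hθ, rfl⟩, hnot⟩
    simp only [mem_insert_iff, mem_singleton_iff, not_or] at hnot
    obtain ⟨hxp, hxq, hxp', hxq'⟩ := hnot
    have hxB : xθ θ ∈ B.intPoints := by
      refine ⟨θ, hIsub hθ, ?_⟩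
      simp only [hxθ, ← hcc, ← hrr]
    obtain ⟨d₁, d₂, ⟨hn1, hn2, hang, hsub, -, -⟩, hpr', hqr'⟩ := hcB _ hxB
    obtain ⟨t, ht0, hpt⟩ := hpr'
    obtain ⟨s, hs0, hqs⟩ := hqr'
    have ht : 0 < t := by
      rcases lt_or_eq_of_le ht0 with h | h
      · exact h
      · exact absurd (by rw [hpt, ← h]; simp : p' = xθ θ) (fun hh => hxp' hh.symm)
    have hs : 0 < s := by
      rcases lt_or_eq_of_le hs0 with h | h
      · exact h
      · exact absurd (by rw [hqs, ← h]; simp : q' = xθ θ) (fun hh => hxq' hh.symm)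
    have hpP : p ∈ P := subset_convexHull ℝ (V : Set Plane) (by exact_mod_cast hp)
    have hqP : q ∈ P := subset_convexHull ℝ (V : Set Plane) (by exact_mod_cast hq)
    obtain ⟨a, b, ha, hb, hpab⟩ := hsub hpP
    obtain ⟨c, e, hc, he, hqce⟩ := hsub hqP
    have h12 : (inner ℝ d₁ d₂ : ℝ) = c₀ := inner_eq_cos hn1 hn2 hang
    have h21 : (inner ℝ d₂ d₁ : ℝ) = c₀ := by rw [real_inner_comm]; exact h12
    have h11 : (inner ℝ d₁ d₁ : ℝ) = 1 := by
      rw [real_inner_self_eq_norm_sq, hn1]; norm_num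
    have h22 : (inner ℝ d₂ d₂ : ℝ) = 1 := by
      rw [real_inner_self_eq_norm_sq, hn2]; norm_num
    have hpe : p - xθ θ = a • d₁ + b • d₂ := by rw [hpab]; abel
    have hqe : q - xθ θ = c • d₁ + e • d₂ := by rw [hqce]; abel
    have hp'e : p' - xθ θ = t • d₁ := by rw [hpt]; abel
    have hq'e : q' - xθ θ = s • d₂ := by rw [hqs]; abel
    have hdot : (inner ℝ (p - xθ θ) (q - xθ θ) : ℝ) = a*c + b*e + (a*e + b*c)*c₀ := by
      rw [hpe, hqe]
      simp only [inner_add_left, inner_add_right, real_inner_smul_left, real_inner_smul_right,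
        h11, h22, h12, h21, mul_one]
      ring
    have hNp : (inner ℝ (p - xθ θ) (p - xθ θ) : ℝ) = a^2 + b^2 + 2*a*b*c₀ := by
      rw [hpe]
      simp only [inner_add_left, inner_add_right, real_inner_smul_left, real_inner_smul_right,
        h11, h22, h12, h21, mul_one]
      ring
    have hNq : (inner ℝ (q - xθ θ) (q - xθ θ) : ℝ) = c^2 + e^2 + 2*c*e*c₀ := by
      rw [hqe]
      simp only [inner_add_left, inner_add_right, real_inner_smul_left, real_inner_smul_right,
        h11, h22, h12, h21, mul_one]
      ring
    have heq : (a*c + b*e + (a*e + b*c)*c₀)^2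
        = c₀^2 * ((a^2+b^2+2*a*b*c₀) * (c^2+e^2+2*c*e*c₀)) := by
      have h0 := hF0 θ
      simp only [hFdef] at h0
      rw [hdot, hNp, hNq] at h0
      linarith
    have hune : ¬(a = 0 ∧ b = 0) := by
      rintro ⟨h1, h2⟩
      exact hxp (by rw [hpab, h1, h2]; simp)
    have hvne : ¬(c = 0 ∧ e = 0) := by
      rintro ⟨h1, h2⟩
      exact hxq (by rw [hqce, h1, h2]; simp)
    rcases rig a b c e c₀ ha hb hc he hc0pos hc0lt heq hune hvne with ⟨hb0, hc0'⟩ | ⟨ha0, he0⟩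
    · left
      have hapos : 0 < a := by
        rcases lt_or_eq_of_le ha with h | h
        · exact h
        · exact absurd ⟨h.symm, hb0⟩ hune
      have hepos : 0 < e := by
        rcases lt_or_eq_of_le he with h | h
        · exact h
        · exact absurd ⟨hc0', h.symm⟩ hvne
      constructor
      · refine ⟨a / t, div_pos hapos ht, ?_⟩
        rw [hpe, hb0, hp'e, smul_smul, zero_smul, add_zero]
        congr 1
        field_simp
      · refine ⟨e / s, div_pos hepos hs, ?_⟩
        rw [hqe, hc0', hq'e, smul_smul, zero_smul, zero_add]
        congr 1
        field_simp
    · right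
      have hbpos : 0 < b := by
        rcases lt_or_eq_of_le hb with h | h
        · exact h
        · exact absurd ⟨ha0, h.symm⟩ hune
      have hcpos : 0 < c := by
        rcases lt_or_eq_of_le hc with h | h
        · exact h
        · exact absurd ⟨h.symm, he0⟩ hvne
      constructor
      · refine ⟨b / s, div_pos hbpos hs, ?_⟩
        rw [hpe, ha0, hq'e, smul_smul, zero_smul, zero_add]
        congr 1
        field_simp
      · refine ⟨c / t, div_pos hcpos ht, ?_⟩
        rw [hqe, he0, hp'e, smul_smul, zero_smul, add_zero]
        congr 1
        field_simp
  -- Step 5: one of the two alternatives holds on an infinite set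
  set S₁ : Set Plane := {x ∈ G | (∃ l : ℝ, 0 < l ∧ p - x = l • (p' - x))
    ∧ (∃ l : ℝ, 0 < l ∧ q - x = l • (q' - x))} with hS₁def
  set S₂ : Set Plane := {x ∈ G | (∃ l : ℝ, 0 < l ∧ p - x = l • (q' - x))
    ∧ (∃ l : ℝ, 0 < l ∧ q - x = l • (p' - x))} with hS₂def
  have hsplit : S₁.Infinite ∨ S₂.Infinite := by
    by_contra hcon
    push_neg at hcon
    obtain ⟨hf1, hf2⟩ := hcon
    have hGsub : G ⊆ S₁ ∪ S₂ := by
      intro x hx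
      rcases hmain x hx with h | h
      · exact Or.inl ⟨hx, h⟩
      · exact Or.inr ⟨hx, h⟩
    exact hGinf ((hf1.union hf2).subset hGsub)
  have hcirc' : ∀ (S : Set Plane), S ⊆ G → ∀ x ∈ S,
      (inner ℝ (x - A.center) (x - A.center) : ℝ) = A.radius^2 :=
    fun S hSG x hx => hcirc x (hSG hx).1
  rcases hsplit with hinf | hinf
  · have hpp : p = p' := collinear_contra A.center A.radius p p' S₁ hinf
      (hcirc' S₁ (fun x hx => hx.1)) (fun x hx => hx.2.1)
    have hqq : q = q' := collinear_contra A.center A.radius q q' S₁ hinf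
      (hcirc' S₁ (fun x hx => hx.1)) (fun x hx => hx.2.2)
    exact hne (Or.inl ⟨hpp.symm, hqq.symm⟩)
  · have hpq : p = q' := collinear_contra A.center A.radius p q' S₂ hinf
      (hcirc' S₂ (fun x hx => hx.1)) (fun x hx => hx.2.1)
    have hqp : q = p' := collinear_contra A.center A.radius q p' S₂ hinf
      (hcirc' S₂ (fun x hx => hx.1)) (fun x hx => hx.2.2)
    exact hne (Or.inr ⟨hqp.symm, hpq.symm⟩)


end
end
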